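/- Let K >= 2, t in {1,...,K-1}, and let c_1 <= c_2 <= ... <= c_K be positive reals. Define for each (t+1)-subset G of {1,...,K} the product P(G) = prod_{k not in G} c_k, and define M_k = (sum over t-subsets S containing k of prod_{k' not in S} c_{k'}) / (sum over (t+1)-subsets G of P(G)). Then M_1 >= M_2 >= ... >= M_K, i.e., weaker receivers (smaller c_k) are assigned larger normalized cache sizes. -/

import Mathlib

open Finset

/-- Generalized coded caching assigns larger normalized cache sizes to weaker receivers:
with `c_1 ≤ … ≤ c_K` (`c_k = I(X;Y_k)`) and
`M_k = (∑_{S ∋ k, |S|=t} ∏_{k'∉S} c_{k'}) / (∑_{|G|=t+1} ∏_{k'∉G} c_{k'})`,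
the map `k ↦ M_k` is antitone. -/
theorem cache_assignment_antitone {K t : ℕ} (hK : 2 ≤ K) (ht1 : 1 ≤ t) (ht2 : t ≤ K - 1)
    (c : Fin K → ℝ) (hc : ∀ k, 0 < c k) (hmono : Monotone c) :
    Antitone (fun k : Fin K =>
      (∑ S ∈ ((univ : Finset (Fin K)).powersetCard t).filter (fun S => k ∈ S),
          ∏ k' ∈ Sᶜ, c k') /
      (∑ G ∈ (univ : Finset (Fin K)).powersetCard (t + 1), ∏ k' ∈ Gᶜ, c k')) := by
  intro i j hij
  simp only
  apply div_le_div_of_nonneg_right ?_ (le_of_lt ?_)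
  swap
  · apply Finset.sum_pos
    · intro G _; exact Finset.prod_pos fun k _ => hc k
    · apply Finset.powersetCard_nonempty.mpr
      simpa using Nat.add_le_of_le_sub (by omega) ht2
  set σ := Equiv.swap i j with hσ
  have hswap : ∀ S : Finset (Fin K), (S.map σ.toEmbedding)ᶜ = Sᶜ.map σ.toEmbedding := by
    intro S; ext a
    simp [Finset.mem_map_equiv]
  have key : (∑ S ∈ ((univ : Finset (Fin K)).powersetCard t).filter (fun S => j ∈ S),
      ∏ k' ∈ Sᶜ, c k')
      = ∑ S ∈ ((univ : Finset (Fin K)).powersetCard t).filter (fun S => i ∈ S),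
      ∏ k' ∈ (S.map σ.toEmbedding)ᶜ, c k' := by
    refine Finset.sum_nbij' (fun S => S.map σ.toEmbedding) (fun S => S.map σ.toEmbedding)
      ?_ ?_ ?_ ?_ ?_
    · intro S hS
      simp only [Finset.mem_filter, Finset.mem_powersetCard_univ, Finset.card_map,
        Finset.mem_map_equiv] at hS ⊢
      refine ⟨hS.1, ?_⟩
      simpa [hσ, Equiv.swap_apply_right] using hS.2
    · intro S hS
      simp only [Finset.mem_filter, Finset.mem_powersetCard_univ, Finset.card_map,
        Finset.mem_map_equiv] at hS ⊢
      refine ⟨hS.1, ?_⟩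
      simpa [hσ, Equiv.swap_apply_left] using hS.2
    all_goals
      intro S _
      rw [Finset.map_map]
      have h2 : σ.toEmbedding.trans σ.toEmbedding = Function.Embedding.refl _ := by
        ext a; simp [hσ]
      rw [h2, Finset.map_refl]
  rw [key]
  apply Finset.sum_le_sum
  intro S hS
  rw [hswap, Finset.prod_map]
  apply Finset.prod_le_prod
  · intro k _; exact (hc _).le
  · intro k hk
    simp only [Finset.mem_filter] at hS
    have hki : k ≠ i := by
      intro h; subst h
      exact (Finset.mem_compl.mp hk) hS.2
    rcases eq_or_ne k j with rfl | hkj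
    · simpa [hσ, Equiv.swap_apply_right] using hmono hij
    · simp [hσ, Equiv.swap_apply_of_ne_of_ne hki hkj]
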